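/- (Laplacian identity for the regularized cone potential, flat local version of equation (5).) Let β ∈ (0,1] and ε > 0, and define u : ℝ² → ℝ by u(x, y) := χ_{β,ε}(x² + y²). Then u is twice continuously differentiable on ℝ², and at every point (x, y) ∈ ℝ² its Laplacian satisfies ∂²u/∂x² + ∂²u/∂y² = 4 (ε² + x² + y²)^{β−1}. -/

import Mathlib

open MeasureTheory Real Set

noncomputable section

def chiReg (β ε t : ℝ) : ℝ :=
  (1 / β) * ∫ r in (0 : ℝ)..t, ((ε ^ 2 + r) ^ β - ε ^ (2 * β)) / r

def chiRad (β ε : ℝ) : ℝ × ℝ → ℝ := fun p => chiReg β ε (p.1 ^ 2 + p.2 ^ 2)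

namespace ChiAux

variable {β ε : ℝ}

/-- analyticity of `f r = (ε² + r)^β` on `Ioi (-ε²)` -/
theorem fa (hε : 0 < ε) (t : ℝ) (ht : -ε^2 < t) :
    AnalyticAt ℝ (fun r : ℝ => (ε^2 + r) ^ β) t := by
  have hpos : 0 < ε^2 + t := by nlinarith
  have hC : AnalyticAt ℂ (fun z : ℂ => ((ε^2:ℝ) + z) ^ (β:ℂ)) (t:ℂ) := by
    apply AnalyticAt.cpow (analyticAt_const.add analyticAt_id) analyticAt_const
    show ((ε^2:ℝ):ℂ) + (t:ℂ) ∈ Complex.slitPlane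
    rw [show ((ε^2:ℝ):ℂ) + (t:ℂ) = ((ε^2 + t : ℝ) : ℂ) by push_cast; ring]
    exact Complex.ofReal_mem_slitPlane.2 hpos
  have hR : AnalyticAt ℝ (fun r : ℝ => ((((ε^2:ℝ):ℂ) + (r:ℂ)) ^ (β:ℂ)).re) t := by
    have h2 : AnalyticAt ℝ (fun r : ℝ => (((ε^2:ℝ):ℂ) + (r:ℂ)) ^ (β:ℂ)) t :=
      (hC.restrictScalars (𝕜 := ℝ)).comp (Complex.ofRealCLM.analyticAt t)
    exact (Complex.reCLM.analyticAt _).comp h2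
  apply hR.congr
  have hev : ∀ᶠ r : ℝ in nhds t, r ∈ Ioi (-ε^2) := isOpen_Ioi.eventually_mem ht
  filter_upwards [hev] with r hr
  have hpos' : (0:ℝ) ≤ ε^2 + r := by have := mem_Ioi.1 hr; linarith
  have := Complex.ofReal_cpow hpos' β
  rw [show (((ε^2:ℝ):ℂ) + (r:ℂ)) = ((ε^2 + r : ℝ) : ℂ) by push_cast; ring, ← this,
    Complex.ofReal_re]

/-- analyticity of `g = dslope f 0` on `Ioi (-ε²)` -/
theorem ga (hε : 0 < ε) (t : ℝ) (ht : -ε^2 < t) :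
    AnalyticAt ℝ (dslope (fun r : ℝ => (ε^2 + r) ^ β) 0) t := by
  rcases eq_or_ne t 0 with rfl | hne
  · obtain ⟨p, hp⟩ := fa (β := β) hε 0 (by nlinarith)
    exact ⟨_, hp.has_fpower_series_dslope_fslope⟩
  · have h1 : AnalyticAt ℝ (slope (fun r : ℝ => (ε^2 + r) ^ β) 0) t := by
      have : AnalyticAt ℝ (fun r : ℝ => (r - 0)⁻¹ * ((ε^2 + r) ^ β - (ε^2 + 0) ^ β)) t := by
        refine AnalyticAt.mul (AnalyticAt.inv ?_ (by simpa using hne)) ?_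
        · exact analyticAt_id.sub analyticAt_const
        · exact (fa hε t ht).sub analyticAt_const
      exact this.congr (Filter.Eventually.of_forall fun r => by simp [slope, smul_eq_mul])
    exact h1.congr (dslope_eventuallyEq_slope_of_ne _ hne).symm

end ChiAux

/-- **Laplacian identity for the regularized cone potential** (flat local version of equation
(5)). For `β ∈ (0,1]` and `ε > 0`, the function `u(x,y) = χ_{β,ε}(x² + y²)` is twice
continuously differentiable on `ℝ²` and its Laplacian satisfies
`∂²u/∂x² + ∂²u/∂y² = 4 (ε² + x² + y²)^{β-1}` at every point. -/
theorem chiRad_laplacian (β ε : ℝ) (hβ : β ∈ Set.Ioc (0 : ℝ) 1) (hε : 0 < ε) :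
    ContDiff ℝ 2 (chiRad β ε) ∧
    ∀ p : ℝ × ℝ,
      fderiv ℝ (fun q => fderiv ℝ (chiRad β ε) q ((1 : ℝ), (0 : ℝ))) p ((1 : ℝ), (0 : ℝ)) +
        fderiv ℝ (fun q => fderiv ℝ (chiRad β ε) q ((0 : ℝ), (1 : ℝ))) p ((0 : ℝ), (1 : ℝ)) =
      4 * (ε ^ 2 + p.1 ^ 2 + p.2 ^ 2) ^ (β - 1) := by
  obtain ⟨hβ0, hβ1⟩ := hβ
  have hβne : β ≠ 0 := ne_of_gt hβ0
  set g : ℝ → ℝ := dslope (fun r : ℝ => (ε^2 + r) ^ β) 0 with hgdef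
  have hg : ∀ t : ℝ, -ε^2 < t → AnalyticAt ℝ g t := ChiAux.ga hε
  -- key identity : r * g r = (ε²+r)^β - (ε²)^β for all r
  have hmul : ∀ r : ℝ, r * g r = (ε^2 + r) ^ β - (ε^2 + 0) ^ β := by
    intro r
    have := sub_smul_dslope (fun r : ℝ => (ε^2 + r) ^ β) 0 r
    simpa [smul_eq_mul] using this
  -- derivative of f
  have hf' : ∀ t : ℝ, -ε^2 < t →
      HasDerivAt (fun r : ℝ => (ε^2 + r) ^ β) (β * (ε^2 + t) ^ (β - 1)) t := by
    intro t ht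
    have hx : ε^2 + t ≠ 0 := by nlinarith
    have h1 : HasDerivAt (fun r : ℝ => ε^2 + r) 1 t := by
      simpa using (hasDerivAt_id t).const_add (ε^2)
    have := (Real.hasDerivAt_rpow_const (x := ε^2 + t) (p := β) (Or.inl hx)).comp t h1
    rw [mul_one] at this; exact this
  -- key ODE identity
  have hkey : ∀ t : ℝ, -ε^2 < t → g t + t * deriv g t = β * (ε^2 + t) ^ (β - 1) := by
    intro t ht
    have hgd : HasDerivAt g (deriv g t) t := ((hg t ht).differentiableAt).hasDerivAt
    have h1 : HasDerivAt (fun r : ℝ => r * g r) (1 * g t + t * deriv g t) t :=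
      (hasDerivAt_id t).mul hgd
    have h2 : (fun r : ℝ => r * g r) = fun r => (ε^2 + r) ^ β - (ε^2 + 0) ^ β :=
      funext hmul
    rw [h2] at h1
    have h4 : HasDerivAt (fun r : ℝ => (ε^2 + r) ^ β - (ε^2 + 0) ^ β)
        (β * (ε^2 + t) ^ (β - 1)) t := (hf' t ht).sub_const _
    have := h1.unique h4
    linarith [this]
  -- FTC
  have hcont : ∀ t : ℝ, -ε^2 < t → ContinuousAt g t := fun t ht => (hg t ht).continuousAt
  have hchi : ∀ t : ℝ, -ε^2 < t →
      HasDerivAt (fun s : ℝ => (1/β) * ∫ r in (0:ℝ)..s, g r) ((1/β) * g t) t := by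
    intro t ht
    have hsub : uIcc (0:ℝ) t ⊆ Ioi (-ε^2) := by
      intro r hr
      have h1 := hr.1
      have h2 : min 0 t ≤ r := hr.1
      have : -ε^2 < min 0 t := lt_min (by nlinarith) ht
      exact mem_Ioi.2 (lt_of_lt_of_le this h2)
    have hint : IntervalIntegrable g volume 0 t := by
      apply ContinuousOn.intervalIntegrable
      exact fun r hr => ((hcont r (hsub hr)).continuousWithinAt)
    have hmeas : StronglyMeasurableAtFilter g (nhds t) volume :=
      ContinuousAt.stronglyMeasurableAtFilter isOpen_Ioi
        (fun x hx => hcont x hx) t ht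
    exact (intervalIntegral.integral_hasDerivAt_right hint hmeas (hcont t ht)).const_mul (1/β)
  -- chiReg = regularized integral of g
  have hEq : chiReg β ε = fun t : ℝ => (1/β) * ∫ r in (0:ℝ)..t, g r := by
    funext t
    unfold chiReg
    congr 1
    apply intervalIntegral.integral_congr_ae
    have h0 : ∀ᵐ r : ℝ, r ≠ (0:ℝ) := by
      rw [MeasureTheory.ae_iff]
      simpa using MeasureTheory.measure_singleton (0:ℝ)
    filter_upwards [h0] with r hr _
    have h2 : ε ^ (2*β) = (ε^2 + 0 : ℝ) ^ β := by
      rw [add_zero, Real.rpow_mul hε.le, show ((2:ℝ)) = ((2:ℕ):ℝ) by norm_num,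
        Real.rpow_natCast]
    rw [hgdef, dslope_of_ne _ hr]
    simp [slope_def_field, h2]
  -- name the composed function
  set Χ : ℝ → ℝ := fun t : ℝ => (1/β) * ∫ r in (0:ℝ)..t, g r with hΧ
  set qf : ℝ × ℝ → ℝ := fun p => p.1^2 + p.2^2 with hqf
  have hpos : ∀ p : ℝ × ℝ, -ε^2 < qf p := by
    intro p
    have := sq_nonneg p.1; have := sq_nonneg p.2; have := sq_nonneg ε
    simp only [hqf]; nlinarith
  have hrad : chiRad β ε = Χ ∘ qf := by
    funext p; simp [chiRad, hEq, hΧ, hqf, Function.comp]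
  -- C² of Χ on Ioi (-ε²)
  have hX2 : ContDiffOn ℝ 2 Χ (Ioi (-ε^2)) := by
    rw [show (2 : WithTop ℕ∞) = 1 + 1 by norm_num]
    refine (contDiffOn_succ_iff_deriv_of_isOpen isOpen_Ioi).2 ⟨?_, ?_, ?_⟩
    · exact fun t ht => ((hchi t ht).differentiableAt.differentiableWithinAt)
    · intro h; exact absurd h (by norm_num)
    · refine ContDiffOn.congr
        (f := fun t => (1/β) * g t)
        (fun t ht => (contDiffAt_const.mul ((hg t ht).contDiffAt)).contDiffWithinAt) ?_
      intro t ht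
      exact (hchi t ht).deriv
  have hq2 : ContDiff ℝ 2 qf := (contDiff_fst.pow 2).add (contDiff_snd.pow 2)
  have hCD : ContDiff ℝ 2 (chiRad β ε) := by
    rw [hrad, ← contDiffOn_univ]
    exact hX2.comp hq2.contDiffOn (fun p _ => hpos p)
  refine ⟨hCD, fun p => ?_⟩
  -- derivative of qf
  have hQ : ∀ q : ℝ × ℝ, HasFDerivAt qf
      (((2:ℝ)*q.1) • ContinuousLinearMap.fst ℝ ℝ ℝ
        + ((2:ℝ)*q.2) • ContinuousLinearMap.snd ℝ ℝ ℝ) q := by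
    intro q
    have h1 : HasFDerivAt (fun p : ℝ × ℝ => p.1^2)
        (((2:ℝ)*q.1) • ContinuousLinearMap.fst ℝ ℝ ℝ) q := by
      simp only [pow_two, two_mul, add_smul]
      exact (hasFDerivAt_fst).mul (hasFDerivAt_fst)
    have h2 : HasFDerivAt (fun p : ℝ × ℝ => p.2^2)
        (((2:ℝ)*q.2) • ContinuousLinearMap.snd ℝ ℝ ℝ) q := by
      simp only [pow_two, two_mul, add_smul]
      exact (hasFDerivAt_snd).mul (hasFDerivAt_snd)
    exact h1.add h2
  -- first fderiv of u
  have hU : ∀ q : ℝ × ℝ, HasFDerivAt (Χ ∘ qf)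
      ((1/β * g (qf q)) • (((2:ℝ)*q.1) • ContinuousLinearMap.fst ℝ ℝ ℝ
        + ((2:ℝ)*q.2) • ContinuousLinearMap.snd ℝ ℝ ℝ)) q :=
    fun q => (hchi (qf q) (hpos q)).comp_hasFDerivAt q (hQ q)
  have hfd1 : (fun q : ℝ × ℝ => fderiv ℝ (Χ ∘ qf) q ((1:ℝ), (0:ℝ)))
      = fun q : ℝ × ℝ => (1/β * g (qf q)) * (2*q.1) := by
    funext q
    rw [(hU q).fderiv]
    simp
  have hfd2 : (fun q : ℝ × ℝ => fderiv ℝ (Χ ∘ qf) q ((0:ℝ), (1:ℝ)))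
      = fun q : ℝ × ℝ => (1/β * g (qf q)) * (2*q.2) := by
    funext q
    rw [(hU q).fderiv]
    simp
  -- second derivatives
  have hc : HasFDerivAt (fun q : ℝ × ℝ => 1/β * g (qf q))
      ((1/β * deriv g (qf p)) • (((2:ℝ)*p.1) • ContinuousLinearMap.fst ℝ ℝ ℝ
        + ((2:ℝ)*p.2) • ContinuousLinearMap.snd ℝ ℝ ℝ)) p := by
    have hd : HasDerivAt (fun s => 1/β * g s) (1/β * deriv g (qf p)) (qf p) :=
      ((hg _ (hpos p)).differentiableAt.hasDerivAt).const_mul (1/β)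
    exact hd.comp_hasFDerivAt p (hQ p)
  have hd1 : HasFDerivAt (fun q : ℝ × ℝ => (2:ℝ)*q.1)
      ((2:ℝ) • ContinuousLinearMap.fst ℝ ℝ ℝ) p := (hasFDerivAt_fst).const_mul 2
  have hd2 : HasFDerivAt (fun q : ℝ × ℝ => (2:ℝ)*q.2)
      ((2:ℝ) • ContinuousLinearMap.snd ℝ ℝ ℝ) p := (hasFDerivAt_snd).const_mul 2
  have hw1 : HasFDerivAt (fun q : ℝ × ℝ => 1/β * g (qf q) * ((2:ℝ)*q.1)) _ p := hc.mul hd1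
  have hw2 : HasFDerivAt (fun q : ℝ × ℝ => 1/β * g (qf q) * ((2:ℝ)*q.2)) _ p := hc.mul hd2
  rw [hrad, hfd1, hfd2, hw1.fderiv, hw2.fderiv]
  simp only [ContinuousLinearMap.add_apply, ContinuousLinearMap.smul_apply,
    ContinuousLinearMap.coe_fst', ContinuousLinearMap.coe_snd', smul_eq_mul]
  have hk := hkey (qf p) (hpos p)
  have h2 : (ε^2 + qf p) ^ (β - 1) = (1/β) * (g (qf p) + (qf p) * deriv g (qf p)) := by
    rw [hk]; field_simp
  have h3 : ε^2 + p.1^2 + p.2^2 = ε^2 + qf p := by simp [hqf]; ring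
  rw [h3, h2]
  simp only [hqf]
  ring
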